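/- arXiv:1401.1460 — 2 statements merged into one kernel-verified Lean document; each statement's English description precedes it below -/
import Mathlib

section
/- Two term graphs G₁ and G₂ are bisimilar if and only if there is a term graph G₀ with functional bisimulations from G₁ to G₀ and from G₂ to G₀; in particular, bisimilar term graphs have isomorphic canonical bisimulation collapses. -/
/-- A (root-connected) term graph over signature `Sig` with arity function `ar`,
    with vertex type `V`. -/
structure TermGraph (Sig : Type) (ar : Sig → ℕ) (V : Type) where
  lab : V → Sig
  args : V → List V
  root : V
  arity_ok : ∀ v, (args v).length = ar (lab v)
  rooted : ∀ v, Relation.ReflTransGen (fun a b => b ∈ args a) root v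

/-- `R` is a bisimulation between term graphs `G₁` and `G₂`. -/
def IsBisim {Sig : Type} {ar : Sig → ℕ} {V₁ V₂ : Type}
    (G₁ : TermGraph Sig ar V₁) (G₂ : TermGraph Sig ar V₂)
    (R : V₁ → V₂ → Prop) : Prop :=
  R G₁.root G₂.root ∧
  (∀ v w, R v w → G₁.lab v = G₂.lab w) ∧
  (∀ v w, R v w → List.Forall₂ R (G₁.args v) (G₂.args w))

/-- `G₁` and `G₂` are bisimilar. -/
def Bisim {Sig : Type} {ar : Sig → ℕ} {V₁ V₂ : Type}
    (G₁ : TermGraph Sig ar V₁) (G₂ : TermGraph Sig ar V₂) : Prop :=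
  ∃ R, IsBisim G₁ G₂ R

/-- `h` is a homomorphism of term graphs: it maps root to root, preserves labels,
    and commutes with the argument function. -/
def IsHom {Sig : Type} {ar : Sig → ℕ} {V₁ V₂ : Type}
    (G₁ : TermGraph Sig ar V₁) (G₂ : TermGraph Sig ar V₂) (h : V₁ → V₂) : Prop :=
  h G₁.root = G₂.root ∧
  (∀ v, G₂.lab (h v) = G₁.lab v) ∧
  (∀ v, G₂.args (h v) = (G₁.args v).map h)

/-- There exists a functional bisimulation (homomorphism) from `G₁` to `G₂`. -/
def FunBisim {Sig : Type} {ar : Sig → ℕ} {V₁ V₂ : Type}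
    (G₁ : TermGraph Sig ar V₁) (G₂ : TermGraph Sig ar V₂) : Prop :=
  ∃ h, IsHom G₁ G₂ h

/-- An isomorphism of term graphs is a bijective homomorphism. -/
def Iso {Sig : Type} {ar : Sig → ℕ} {V₁ V₂ : Type}
    (G₁ : TermGraph Sig ar V₁) (G₂ : TermGraph Sig ar V₂) : Prop :=
  ∃ h, IsHom G₁ G₂ h ∧ Function.Bijective h

/-- The largest self-bisimulation on a term graph. -/
def MaxBisim {Sig : Type} {ar : Sig → ℕ} {V : Type} (G : TermGraph Sig ar V)
    (v w : V) : Prop :=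
  ∃ R, IsBisim G G R ∧ R v w

/-- The canonical bisimulation collapse of a term graph, characterised as the factor
    term graph of the graph by its largest self-bisimulation. -/
def InducedQuotient {Sig : Type} {ar : Sig → ℕ} {V : Type} (G : TermGraph Sig ar V)
    (Q : TermGraph Sig ar (Quot (MaxBisim G))) : Prop :=
  Q.root = Quot.mk (MaxBisim G) G.root ∧
  (∀ v, Q.lab (Quot.mk (MaxBisim G) v) = G.lab v) ∧
  (∀ v, Q.args (Quot.mk (MaxBisim G) v) = (G.args v).map (Quot.mk (MaxBisim G)))

section Aux

open List

theorem tg_forall₂_map_eq {α β γ : Type*} {f : α → γ} {g : β → γ}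
    {l₁ : List α} {l₂ : List β} (h : Forall₂ (fun a b => f a = g b) l₁ l₂) :
    l₁.map f = l₂.map g := by
  induction h with
  | nil => rfl
  | cons h _ ih => simp [h, ih]

theorem tg_forall₂_of_map_eq {α β γ : Type*} {f : α → γ} {g : β → γ} :
    ∀ {l₁ : List α} {l₂ : List β}, l₁.map f = l₂.map g →
      Forall₂ (fun a b => f a = g b) l₁ l₂ := by
  intro l₁
  induction l₁ with
  | nil =>
    intro l₂ h
    cases l₂ with
    | nil => exact Forall₂.nil
    | cons b t => simp at h
  | cons a t ih =>
    intro l₂ h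
    cases l₂ with
    | nil => simp at h
    | cons b t' =>
      simp only [map_cons, cons.injEq] at h
      exact Forall₂.cons h.1 (ih h.2)

theorem tg_forall₂_comp {α β γ : Type*} {R : α → β → Prop} {S : β → γ → Prop} :
    ∀ {l₁ : List α} {l₂ : List β} {l₃ : List γ}, Forall₂ R l₁ l₂ → Forall₂ S l₂ l₃ →
      Forall₂ (fun a c => ∃ b, R a b ∧ S b c) l₁ l₃ := by
  intro l₁ l₂ l₃ h
  induction h generalizing l₃ with
  | nil => intro h2; cases h2; exact Forall₂.nil
  | cons hab _ ih =>
    intro h2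
    cases h2 with
    | cons hbc h' => exact Forall₂.cons ⟨_, hab, hbc⟩ (ih h')

theorem tg_forall₂_mem_right {α β : Type*} {R : α → β → Prop} {l₁ : List α}
    {l₂ : List β} (h : Forall₂ R l₁ l₂) {b : β} (hb : b ∈ l₂) : ∃ a ∈ l₁, R a b := by
  induction h with
  | nil => cases hb
  | cons hab _ ih =>
    rcases mem_cons.1 hb with rfl | hb'
    · exact ⟨_, mem_cons_self, hab⟩
    · obtain ⟨a, ha, hRa⟩ := ih hb'
      exact ⟨a, mem_cons_of_mem _ ha, hRa⟩

variable {Sig : Type} {ar : Sig → ℕ} {V₁ V₂ V₃ V : Type}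
  {G₁ : TermGraph Sig ar V₁} {G₂ : TermGraph Sig ar V₂} {G₃ : TermGraph Sig ar V₃}

theorem tg_bisim_comp {R : V₁ → V₂ → Prop} {S : V₂ → V₃ → Prop}
    (h1 : IsBisim G₁ G₂ R) (h2 : IsBisim G₂ G₃ S) :
    IsBisim G₁ G₃ (fun a c => ∃ b, R a b ∧ S b c) :=
  ⟨⟨G₂.root, h1.1, h2.1⟩,
   fun _ _ ⟨b, hab, hbc⟩ => (h1.2.1 _ _ hab).trans (h2.2.1 _ _ hbc),
   fun _ _ ⟨b, hab, hbc⟩ => tg_forall₂_comp (h1.2.2 _ _ hab) (h2.2.2 _ _ hbc)⟩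

theorem tg_bisim_flip {R : V₁ → V₂ → Prop} (h : IsBisim G₁ G₂ R) :
    IsBisim G₂ G₁ (fun b a => R a b) :=
  ⟨h.1, fun v w hw => (h.2.1 _ _ hw).symm, fun v w hw => (h.2.2 _ _ hw).flip⟩

theorem tg_bisim_total {R : V₁ → V₂ → Prop} (h : IsBisim G₁ G₂ R) (w : V₂) :
    ∃ v, R v w := by
  induction G₂.rooted w with
  | refl => exact ⟨G₁.root, h.1⟩
  | tail _ hmem ih =>
    obtain ⟨v, hv⟩ := ih
    obtain ⟨a, _, hRa⟩ := tg_forall₂_mem_right (h.2.2 _ _ hv) hmem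
    exact ⟨a, hRa⟩

theorem tg_maxBisim_isBisim (G : TermGraph Sig ar V) : IsBisim G G (MaxBisim G) :=
  ⟨⟨Eq, ⟨rfl, fun _ _ h => by rw [h], fun v w h => h ▸ forall₂_refl _⟩, rfl⟩,
   fun _ _ ⟨_, hR, hvw⟩ => hR.2.1 _ _ hvw,
   fun _ _ ⟨R, hR, hvw⟩ => (hR.2.2 _ _ hvw).imp (fun _ _ hab => ⟨R, hR, hab⟩)⟩

theorem tg_maxBisim_left {R : V₁ → V₂ → Prop} (hR : IsBisim G₁ G₂ R) {a a' : V₁}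
    {b : V₂} (h1 : R a b) (h2 : R a' b) : MaxBisim G₁ a a' :=
  ⟨_, tg_bisim_comp hR (tg_bisim_flip hR), b, h1, h2⟩

theorem tg_maxBisim_right {R : V₁ → V₂ → Prop} (hR : IsBisim G₁ G₂ R) {a : V₁}
    {b b' : V₂} (h1 : R a b) (h2 : R a b') : MaxBisim G₂ b b' :=
  ⟨_, tg_bisim_comp (tg_bisim_flip hR) hR, a, h1, h2⟩

/-- The canonical bisimulation collapse as an explicit term graph. -/
noncomputable def tgCollapse (G : TermGraph Sig ar V) :
    TermGraph Sig ar (Quot (MaxBisim G)) where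
  lab := Quot.lift G.lab (fun _ _ ⟨_, hR, hvw⟩ => hR.2.1 _ _ hvw)
  args := Quot.lift (fun v => (G.args v).map (Quot.mk _))
    (fun _ _ ⟨R, hR, hvw⟩ =>
      tg_forall₂_map_eq ((hR.2.2 _ _ hvw).imp
        (fun _ _ hab => Quot.sound ⟨R, hR, hab⟩)))
  root := Quot.mk _ G.root
  arity_ok := by
    intro q
    induction q using Quot.ind with
    | _ v => simpa using G.arity_ok v
  rooted := by
    intro q
    induction q using Quot.ind with
    | _ v =>
      induction G.rooted v with
      | refl => exact Relation.ReflTransGen.refl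
      | tail _ hmem ih =>
        exact ih.tail (by simpa using List.mem_map_of_mem (f := Quot.mk _) hmem)

theorem tg_eq_isBisim (G : TermGraph Sig ar V) : IsBisim G G Eq :=
  ⟨rfl, fun _ _ h => by rw [h], fun v w h => h ▸ List.forall₂_refl _⟩

theorem tg_eqvGen_maxBisim {G : TermGraph Sig ar V} {a b : V}
    (h : Relation.EqvGen (MaxBisim G) a b) : MaxBisim G a b := by
  induction h with
  | rel _ _ h => exact h
  | refl a => exact ⟨Eq, tg_eq_isBisim G, rfl⟩
  | symm _ _ _ ih => exact ⟨_, tg_bisim_flip (tg_maxBisim_isBisim G), ih⟩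
  | trans a b c _ _ ih1 ih2 =>
    exact ⟨_, tg_bisim_comp (tg_maxBisim_isBisim G) (tg_maxBisim_isBisim G), b, ih1, ih2⟩

end Aux
/-- Two term graphs are bisimilar if and only if they have functional bisimulations
    to a common term graph; in particular, bisimilar term graphs have isomorphic
    canonical bisimulation collapses. -/
theorem bisim_iff_common_funbisim {Sig : Type} {ar : Sig → ℕ} {V₁ V₂ : Type}
    (G₁ : TermGraph Sig ar V₁) (G₂ : TermGraph Sig ar V₂) :
    (Bisim G₁ G₂ ↔
      ∃ (V₀ : Type) (G₀ : TermGraph Sig ar V₀), FunBisim G₁ G₀ ∧ FunBisim G₂ G₀) ∧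
    (Bisim G₁ G₂ →
      ∀ (Q₁ : TermGraph Sig ar (Quot (MaxBisim G₁)))
        (Q₂ : TermGraph Sig ar (Quot (MaxBisim G₂))),
        InducedQuotient G₁ Q₁ → InducedQuotient G₂ Q₂ → Iso Q₁ Q₂) := by
  constructor
  · constructor
    · rintro ⟨R, hR⟩
      refine ⟨Quot (MaxBisim G₁), tgCollapse G₁, ⟨Quot.mk _, rfl, fun v => rfl, fun v => rfl⟩, ?_⟩
      -- hom from G₂ into the collapse of G₁, via a choice of R-related vertices
      have htot : ∀ w, ∃ v, R v w := tg_bisim_total hR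
      set d : V₂ → V₁ := fun w => (htot w).choose with hd
      have hdR : ∀ w, R (d w) w := fun w => (htot w).choose_spec
      refine ⟨fun w => Quot.mk _ (d w), ?_, ?_, ?_⟩
      · exact Quot.sound (tg_maxBisim_left hR (hdR G₂.root) hR.1)
      · exact fun w => hR.2.1 _ _ (hdR w)
      · intro w
        show (G₁.args (d w)).map (Quot.mk _) = _
        exact tg_forall₂_map_eq ((hR.2.2 _ _ (hdR w)).imp
          (fun a b hab => Quot.sound (tg_maxBisim_left hR hab (hdR b))))
    · rintro ⟨V₀, G₀, ⟨h₁, hh₁⟩, ⟨h₂, hh₂⟩⟩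
      refine ⟨fun v w => h₁ v = h₂ w, hh₁.1.trans hh₂.1.symm, ?_, ?_⟩
      · intro v w hvw
        rw [← hh₁.2.1 v, ← hh₂.2.1 w, hvw]
      · intro v w hvw
        apply tg_forall₂_of_map_eq
        rw [← hh₁.2.2 v, ← hh₂.2.2 w, hvw]
  · rintro ⟨R, hR⟩ Q₁ Q₂ hQ₁ hQ₂
    have htot : ∀ v, ∃ w, R v w := tg_bisim_total (tg_bisim_flip hR)
    set c : V₁ → V₂ := fun v => (htot v).choose with hc
    have hcR : ∀ v, R v (c v) := fun v => (htot v).choose_spec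
    have wd : ∀ v v', MaxBisim G₁ v v' →
        Quot.mk (MaxBisim G₂) (c v) = Quot.mk (MaxBisim G₂) (c v') := by
      intro v v' hM
      exact Quot.sound ⟨_, tg_bisim_comp (tg_bisim_flip hR)
        (tg_bisim_comp (tg_maxBisim_isBisim G₁) hR),
        v, hcR v, v', hM, hcR v'⟩
    refine ⟨Quot.lift (fun v => Quot.mk _ (c v)) wd, ⟨?_, ?_, ?_⟩, ?_, ?_⟩
    · rw [hQ₁.1, hQ₂.1]
      exact Quot.sound (tg_maxBisim_right hR (hcR G₁.root) hR.1)
    · intro q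
      induction q using Quot.ind with
      | _ v => rw [hQ₁.2.1 v]; exact (hQ₂.2.1 (c v)).trans (hR.2.1 _ _ (hcR v)).symm
    · intro q
      induction q using Quot.ind with
      | _ v =>
        show Q₂.args (Quot.mk _ (c v)) = _
        rw [hQ₂.2.2 (c v), hQ₁.2.2 v, List.map_map]
        exact (tg_forall₂_map_eq ((hR.2.2 _ _ (hcR v)).imp
          (fun a b hab => Quot.sound (tg_maxBisim_right hR (hcR a) hab)))).symm
    · intro q q' hqq'
      induction q using Quot.ind with
      | _ v =>
        induction q' using Quot.ind with
        | _ v' =>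
          have hM₂ : MaxBisim G₂ (c v) (c v') := tg_eqvGen_maxBisim (Quot.eqvGen_exact hqq')
          exact Quot.sound ⟨_, tg_bisim_comp hR
            (tg_bisim_comp (tg_maxBisim_isBisim G₂) (tg_bisim_flip hR)),
            c v, hcR v, c v', hM₂, hcR v'⟩
    · intro q
      induction q using Quot.ind with
      | _ w =>
        obtain ⟨v, hv⟩ := tg_bisim_total hR w
        exact ⟨Quot.mk _ v, Quot.sound (tg_maxBisim_right hR (hcR v) hv)⟩
end

section
/- Every term graph has a bisimulation collapse, and the canonical bisimulation collapse of G is the minimum of the homomorphism preorder on the bisimilarity class of G: for every term graph G′ bisimilar to G there is a functional bisimulation from G′ to the canonical collapse of G. -/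
/-- A bisimulation collapse of a term graph. -/
def IsCollapse {Sig : Type} {ar : Sig → ℕ} {V V₀ : Type}
    (G : TermGraph Sig ar V) (G₀ : TermGraph Sig ar V₀) : Prop :=
  FunBisim G G₀ ∧
  ∀ (V' : Type) (G' : TermGraph Sig ar V'), FunBisim G₀ G' → Iso G' G₀

section Aux

lemma forall2_of_map_eq {α β γ : Type*} {f : α → γ} {g : β → γ} :
    ∀ {l₁ : List α} {l₂ : List β}, l₁.map f = l₂.map g →
      List.Forall₂ (fun a b => f a = g b) l₁ l₂
  | [], [], _ => .nil
  | a :: l₁, b :: l₂, h => by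
    simp only [List.map_cons, List.cons.injEq] at h
    exact .cons h.1 (forall2_of_map_eq h.2)
  | [], _ :: _, h => by simp at h
  | _ :: _, [], h => by simp at h

lemma map_eq_of_forall2 {α β γ : Type*} {f : α → γ} {g : β → γ} {l₁ : List α} {l₂ : List β}
    (h : List.Forall₂ (fun a b => f a = g b) l₁ l₂) : l₁.map f = l₂.map g := by
  induction h with
  | nil => rfl
  | cons h _ ih => simp only [List.map_cons, h, ih]

lemma forall2_pull {α β γ : Type*} {r : α → β → Prop} {s : α → γ → Prop} :
    ∀ {l : List α} {l₁ : List β} {l₂ : List γ},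
      List.Forall₂ r l l₁ → List.Forall₂ s l l₂ →
      List.Forall₂ (fun b c => ∃ a, r a b ∧ s a c) l₁ l₂ := by
  intro l l₁ l₂ h₁
  induction h₁ generalizing l₂ with
  | nil => intro h₂; cases h₂; exact .nil
  | cons h t ih =>
    intro h₂
    cases h₂ with
    | cons h' t' => exact .cons ⟨_, h, h'⟩ (ih t')

lemma forall2_comp {α β γ : Type*} {r : α → β → Prop} {s : β → γ → Prop} :
    ∀ {l₁ : List α} {l₂ : List β} {l₃ : List γ},
      List.Forall₂ r l₁ l₂ → List.Forall₂ s l₂ l₃ →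
      List.Forall₂ (fun a c => ∃ b, r a b ∧ s b c) l₁ l₃ := by
  intro l₁ l₂ l₃ h₁
  induction h₁ generalizing l₃ with
  | nil => intro h₂; cases h₂; exact .nil
  | cons h t ih =>
    intro h₂
    cases h₂ with
    | cons h' t' => exact .cons ⟨_, h, h'⟩ (ih t')

lemma forall2_swap {α β : Type*} {r : α → β → Prop} {l₁ : List α} {l₂ : List β}
    (h : List.Forall₂ r l₁ l₂) : List.Forall₂ (fun b a => r a b) l₂ l₁ := by
  induction h with
  | nil => exact .nil
  | cons h _ ih => exact .cons h ih

lemma forall2_exists_of_mem {α β : Type*} {r : α → β → Prop} {l₁ : List α} {l₂ : List β}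
    (h : List.Forall₂ r l₁ l₂) {a : α} (ha : a ∈ l₁) : ∃ b, b ∈ l₂ ∧ r a b := by
  induction h with
  | nil => cases ha
  | cons h t ih =>
    rcases List.mem_cons.mp ha with rfl | ha'
    · exact ⟨_, List.mem_cons_self, h⟩
    · obtain ⟨b, hb, hr⟩ := ih ha'
      exact ⟨b, List.mem_cons_of_mem _ hb, hr⟩

variable {Sig : Type} {ar : Sig → ℕ} {V : Type} (G : TermGraph Sig ar V)

lemma isBisim_eq : IsBisim G G Eq := by
  refine ⟨rfl, fun v w h => by rw [h], fun v w h => ?_⟩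
  rw [h, List.forall₂_eq_eq_eq]

lemma isBisim_maxBisim : IsBisim G G (MaxBisim G) := by
  refine ⟨⟨Eq, isBisim_eq G, rfl⟩, ?_, ?_⟩
  · rintro v w ⟨R, hR, hvw⟩
    exact hR.2.1 v w hvw
  · rintro v w ⟨R, hR, hvw⟩
    exact (hR.2.2 v w hvw).imp fun _ _ h => ⟨R, hR, h⟩

lemma maxBisim_equivalence : Equivalence (MaxBisim G) := by
  constructor
  · exact fun v => ⟨Eq, isBisim_eq G, rfl⟩
  · rintro v w ⟨R, hR, hvw⟩
    refine ⟨fun a b => R b a, ⟨hR.1, fun a b h => (hR.2.1 b a h).symm, fun a b h => ?_⟩, hvw⟩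
    exact List.Forall₂.flip (hR.2.2 b a h)
  · rintro u v w ⟨R, hR, huv⟩ ⟨S, hS, hvw⟩
    refine ⟨fun a c => ∃ b, R a b ∧ S b c, ⟨⟨_, hR.1, hS.1⟩, ?_, ?_⟩, ⟨v, huv, hvw⟩⟩
    · rintro a c ⟨b, h₁, h₂⟩
      exact (hR.2.1 a b h₁).trans (hS.2.1 b c h₂)
    · rintro a c ⟨b, h₁, h₂⟩
      exact forall2_comp (hR.2.2 a b h₁) (hS.2.2 b c h₂)

lemma quot_exact {v w : V} (h : Quot.mk (MaxBisim G) v = Quot.mk (MaxBisim G) w) :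
    MaxBisim G v w :=
  ((maxBisim_equivalence G).eqvGen_iff).mp (Quot.eqvGen_exact h)

lemma maxBisim_lab {v w : V} (h : MaxBisim G v w) : G.lab v = G.lab w :=
  (isBisim_maxBisim G).2.1 v w h

lemma maxBisim_args {v w : V} (h : MaxBisim G v w) :
    (G.args v).map (Quot.mk (MaxBisim G)) = (G.args w).map (Quot.mk (MaxBisim G)) :=
  map_eq_of_forall2 (((isBisim_maxBisim G).2.2 v w h).imp fun _ _ hab => Quot.sound hab)

/-- The canonical quotient term graph. -/
def canonQuot : TermGraph Sig ar (Quot (MaxBisim G)) where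
  lab := Quot.lift G.lab fun _ _ h => maxBisim_lab G h
  args := Quot.lift (fun v => (G.args v).map (Quot.mk (MaxBisim G)))
    fun _ _ h => maxBisim_args G h
  root := Quot.mk _ G.root
  arity_ok := by
    intro q
    induction q using Quot.ind with
    | _ v => simpa using G.arity_ok v
  rooted := by
    intro q
    induction q using Quot.ind with
    | _ v =>
      exact Relation.ReflTransGen.lift (Quot.mk (MaxBisim G))
        (fun a b hb => List.mem_map_of_mem hb) _ _ (G.rooted v)

lemma canonQuot_induced : InducedQuotient G (canonQuot G) :=
  ⟨rfl, fun _ => rfl, fun _ => rfl⟩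

/-- Minimality: every graph bisimilar to `G` maps homomorphically onto any
    induced quotient of `G`. -/
lemma funBisim_to_quotient (Q : TermGraph Sig ar (Quot (MaxBisim G)))
    (hQ : InducedQuotient G Q) {V' : Type} (G' : TermGraph Sig ar V')
    (hB : Bisim G' G) : FunBisim G' Q := by
  obtain ⟨R, hRroot, hRlab, hRargs⟩ := hB
  obtain ⟨hQroot, hQlab, hQargs⟩ := hQ
  -- every vertex of G' is related to some vertex of G
  have total : ∀ v', ∃ v, R v' v := by
    intro v'
    induction G'.rooted v' with
    | refl => exact ⟨G.root, hRroot⟩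
    | tail _ hmem ih =>
      obtain ⟨v, hv⟩ := ih
      obtain ⟨w, -, hw⟩ := forall2_exists_of_mem (hRargs _ _ hv) hmem
      exact ⟨w, hw⟩
  -- the relation R⁻¹ ∘ R is a self-bisimulation on G
  have hS : IsBisim G G (fun v w => ∃ v', R v' v ∧ R v' w) := by
    refine ⟨⟨G'.root, hRroot, hRroot⟩, ?_, ?_⟩
    · rintro v w ⟨v', h₁, h₂⟩
      exact (hRlab v' v h₁).symm.trans (hRlab v' w h₂)
    · rintro v w ⟨v', h₁, h₂⟩
      exact forall2_pull (hRargs v' v h₁) (hRargs v' w h₂)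
  have key : ∀ v' v, R v' v → ∀ w, R v' w → Quot.mk (MaxBisim G) v = Quot.mk (MaxBisim G) w :=
    fun v' v h₁ w h₂ => Quot.sound ⟨_, hS, v', h₁, h₂⟩
  classical
  refine ⟨fun v' => Quot.mk (MaxBisim G) (Classical.choose (total v')), ?_, ?_, ?_⟩
  · rw [hQroot]
    exact key _ _ (Classical.choose_spec (total G'.root)) _ hRroot
  · intro v'
    rw [hQlab]
    exact (hRlab _ _ (Classical.choose_spec (total v'))).symm
  · intro v'
    rw [hQargs]
    refine map_eq_of_forall2 ?_
    refine (forall2_swap (hRargs _ _ (Classical.choose_spec (total v')))).imp ?_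
    intro a b' hab
    exact key b' a hab _ (Classical.choose_spec (total b'))

end Aux

/-- Every term graph has a bisimulation collapse, and the canonical bisimulation
    collapse is the minimum of the homomorphism preorder on the bisimilarity class:
    every term graph bisimilar to the given one admits a functional bisimulation to
    the canonical collapse. -/
theorem collapse_exists_and_canonical_is_minimum {Sig : Type} {ar : Sig → ℕ}
    {V : Type} (G : TermGraph Sig ar V) :
    (∃ (V₀ : Type) (G₀ : TermGraph Sig ar V₀), IsCollapse G G₀) ∧
    (∀ Q : TermGraph Sig ar (Quot (MaxBisim G)), InducedQuotient G Q →
      ∀ (V' : Type) (G' : TermGraph Sig ar V'), Bisim G' G → FunBisim G' Q) := by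
  have hQind := canonQuot_induced G
  constructor
  · refine ⟨Quot (MaxBisim G), canonQuot G, ⟨Quot.mk _, rfl, fun _ => rfl, fun _ => rfl⟩, ?_⟩
    rintro V' G' ⟨h, hroot, hlab, hargs⟩
    -- h is surjective: G' is root-connected and homomorphic images are closed under args
    have hsurj : Function.Surjective h := by
      intro v'
      induction G'.rooted v' with
      | refl => exact ⟨(canonQuot G).root, hroot⟩
      | tail _ hmem ih =>
        obtain ⟨q, rfl⟩ := ih
        rw [hargs] at hmem
        obtain ⟨q', -, rfl⟩ := List.mem_map.mp hmem
        exact ⟨q', rfl⟩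
    -- h is injective: the kernel of h ∘ π is a self-bisimulation on G
    have hK : IsBisim G G (fun v w =>
        h (Quot.mk (MaxBisim G) v) = h (Quot.mk (MaxBisim G) w)) := by
      refine ⟨rfl, ?_, ?_⟩
      · intro v w hvw
        have l1 := hlab (Quot.mk (MaxBisim G) v)
        have l2 := hlab (Quot.mk (MaxBisim G) w)
        rw [hvw] at l1
        exact l1.symm.trans l2
      · intro v w hvw
        have a1 := hargs (Quot.mk (MaxBisim G) v)
        have a2 := hargs (Quot.mk (MaxBisim G) w)
        rw [hvw, a2] at a1
        have : ((G.args w).map (Quot.mk (MaxBisim G))).map h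
            = ((G.args v).map (Quot.mk (MaxBisim G))).map h := a1
        rw [List.map_map, List.map_map] at this
        exact forall2_of_map_eq this.symm
    have hinj : Function.Injective h := by
      intro q₁ q₂
      induction q₁ using Quot.ind with
      | _ v =>
        induction q₂ using Quot.ind with
        | _ w =>
          intro hvw
          exact Quot.sound ⟨_, hK, hvw⟩
    -- the inverse of h is a bijective homomorphism from G' to canonQuot G
    obtain ⟨g, hgl, hgr⟩ := Function.bijective_iff_has_inverse.mp ⟨hinj, hsurj⟩
    refine ⟨g, ⟨?_, ?_, ?_⟩, Function.bijective_iff_has_inverse.mpr ⟨h, hgr, hgl⟩⟩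
    · rw [← hroot, hgl]
    · intro v'
      conv_rhs => rw [← hgr v']
      rw [hlab]
    · intro v'
      apply List.map_injective_iff.mpr hinj
      rw [← hargs, hgr, List.map_map]
      have : (h ∘ g) = id := funext hgr
      rw [this, List.map_id]
  · intro Q hQ V' G' hB
    exact funBisim_to_quotient G Q hQ G' hB
end
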